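/- Let γ > 0 be real, let k ≥ 2 be a natural number, and let 0 < q < 1. Define the failure rate of the NGNB(γ,k,q) distribution by r(y) = w_{γ,k,q}(y) / Σ_{j=y}^∞ w_{γ,k,q}(j). Then r is strictly increasing: r(y) < r(y+1) for every natural number y (the NGNB has increasing failure rate, IFR). -/

import Mathlib

open Filter Topology

/-- NGNB unnormalized weight: `w γ k q y = (C(y+k-1, y))^γ * q^y`,
where the binomial coefficient is raised to the real power `γ`. -/
noncomputable def ngnbWeight (γ : ℝ) (k : ℕ) (q : ℝ) (y : ℕ) : ℝ :=
  ((y + k - 1).choose y : ℝ) ^ γ * q ^ y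

/-- Failure rate of the NGNB distribution: `r(y) = w(y) / Σ_{j ≥ y} w(j)`. -/
noncomputable def ngnbFailureRate (γ : ℝ) (k : ℕ) (q : ℝ) (y : ℕ) : ℝ :=
  ngnbWeight γ k q y / ∑' j : ℕ, ngnbWeight γ k q (y + j)

/-- Successive-weight ratio of the NGNB weights. -/
noncomputable def ngnbRatio (γ : ℝ) (k : ℕ) (q : ℝ) (n : ℕ) : ℝ :=
  (((n : ℝ) + k) / ((n : ℝ) + 1)) ^ γ * q

lemma ngnb_weight_pos (γ : ℝ) (k : ℕ) (hk : 2 ≤ k) (q : ℝ) (hq0 : 0 < q) (y : ℕ) :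
    0 < ngnbWeight γ k q y := by
  have h : 0 < (y + k - 1).choose y := Nat.choose_pos (by omega)
  exact mul_pos (Real.rpow_pos_of_pos (by exact_mod_cast h) γ) (pow_pos hq0 y)

lemma ngnbRatio_pos (γ : ℝ) (k : ℕ) (hk : 2 ≤ k) (q : ℝ) (hq0 : 0 < q) (n : ℕ) :
    0 < ngnbRatio γ k q n := by
  unfold ngnbRatio
  have hkr : (2:ℝ) ≤ (k:ℝ) := by exact_mod_cast hk
  have hk2 : (0:ℝ) < (n : ℝ) + k := by positivity
  have : (0:ℝ) < ((n : ℝ) + k) / ((n : ℝ) + 1) := by positivity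
  exact mul_pos (Real.rpow_pos_of_pos this γ) hq0

lemma ngnb_weight_succ (γ : ℝ) (k : ℕ) (hk : 2 ≤ k) (q : ℝ) (n : ℕ) :
    ngnbWeight γ k q (n + 1) = ngnbRatio γ k q n * ngnbWeight γ k q n := by
  have hnat := Nat.add_one_mul_choose_eq (n + k - 1) n
  have h1 : n + k - 1 + 1 = n + k := by omega
  rw [h1] at hnat
  -- hnat : (n+k) * (n+k-1).choose n = (n+k).choose (n+1) * (n+1)
  have hcast : ((n:ℝ) + k) * ((n + k - 1).choose n : ℝ)
      = ((n + k).choose (n + 1) : ℝ) * ((n:ℝ) + 1) := by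
    exact_mod_cast congrArg (Nat.cast (R := ℝ)) hnat
  have hkey : ((n + k).choose (n + 1) : ℝ)
      = ((n:ℝ) + k) / ((n:ℝ) + 1) * ((n + k - 1).choose n : ℝ) := by
    field_simp
    linarith [hcast]
  unfold ngnbWeight ngnbRatio
  have h2 : n + 1 + k - 1 = n + k := by omega
  rw [h2, hkey, Real.mul_rpow (by positivity) (by positivity), pow_succ]
  ring

lemma ngnbRatio_lt (γ : ℝ) (hγ : 0 < γ) (k : ℕ) (hk : 2 ≤ k) (q : ℝ) (hq0 : 0 < q) (n : ℕ) :
    ngnbRatio γ k q (n + 1) < ngnbRatio γ k q n := by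
  unfold ngnbRatio
  push_cast
  have hk' : (2:ℝ) ≤ k := by exact_mod_cast hk
  have hb : ((n:ℝ) + 1 + k) / ((n:ℝ) + 1 + 1) < ((n:ℝ) + k) / ((n:ℝ) + 1) := by
    rw [div_lt_div_iff₀ (by positivity) (by positivity)]
    nlinarith
  have h0 : (0:ℝ) ≤ ((n:ℝ) + 1 + k) / ((n:ℝ) + 1 + 1) := by positivity
  exact mul_lt_mul_of_pos_right (Real.rpow_lt_rpow h0 hb hγ) hq0

lemma ngnbRatio_tendsto (γ : ℝ) (k : ℕ) (q : ℝ) :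
    Tendsto (fun n : ℕ => ngnbRatio γ k q n) atTop (𝓝 q) := by
  have h0 : Tendsto (fun n : ℕ => ((k:ℝ) - 1) / ((n:ℝ) + 1)) atTop (𝓝 0) :=
    tendsto_const_nhds.div_atTop
      (tendsto_atTop_add_const_right _ 1 tendsto_natCast_atTop_atTop)
  have h1 : Tendsto (fun n : ℕ => ((n:ℝ) + k) / ((n:ℝ) + 1)) atTop (𝓝 1) := by
    have h1' : Tendsto (fun n : ℕ => 1 + ((k:ℝ) - 1) / ((n:ℝ) + 1)) atTop (𝓝 (1 + 0)) :=
      tendsto_const_nhds.add h0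
    rw [add_zero] at h1'
    refine h1'.congr fun n => ?_
    have : ((n:ℝ) + 1) ≠ 0 := by positivity
    field_simp
    ring
  have h2 : Tendsto (fun x : ℝ => x ^ γ) (𝓝 1) (𝓝 1) := by
    have := (Real.continuousAt_rpow_const 1 γ (Or.inl one_ne_zero)).tendsto
    simpa using this
  have h3 := (h2.comp h1).mul_const q
  simpa [ngnbRatio, Function.comp] using h3

lemma ngnb_summable (γ : ℝ) (hγ : 0 < γ) (k : ℕ) (hk : 2 ≤ k)
    (q : ℝ) (hq0 : 0 < q) (hq1 : q < 1) :
    Summable (ngnbWeight γ k q) := by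
  have hr1 : (1 + q) / 2 < 1 := by linarith
  apply summable_of_ratio_norm_eventually_le hr1
  have hq : q < (1 + q) / 2 := by linarith
  have hev : ∀ᶠ n in atTop, ngnbRatio γ k q n < (1 + q) / 2 :=
    (ngnbRatio_tendsto γ k q).eventually (Filter.Tendsto.eventually_lt_const hq tendsto_id)
  filter_upwards [hev] with n hn
  have hw := ngnb_weight_pos γ k hk q hq0
  rw [ngnb_weight_succ γ k hk q n, Real.norm_eq_abs, Real.norm_eq_abs,
    abs_of_pos (hw n), abs_of_pos (mul_pos (ngnbRatio_pos γ k hk q hq0 n) (hw n))]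
  exact mul_le_mul_of_nonneg_right hn.le (hw n).le

theorem ngnb_IFR (γ : ℝ) (hγ : 0 < γ) (k : ℕ) (hk : 2 ≤ k)
    (q : ℝ) (hq0 : 0 < q) (hq1 : q < 1) (y : ℕ) :
    ngnbFailureRate γ k q y < ngnbFailureRate γ k q (y + 1) := by
  have hw := ngnb_weight_pos γ k hk q hq0
  have hsum : Summable (ngnbWeight γ k q) := ngnb_summable γ hγ k hk q hq0 hq1
  have hsumy : ∀ m : ℕ, Summable (fun j : ℕ => ngnbWeight γ k q (m + j)) := fun m =>
    hsum.comp_injective (add_right_injective m)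
  have hSpos : ∀ m : ℕ, 0 < ∑' j : ℕ, ngnbWeight γ k q (m + j) := fun m =>
    Summable.tsum_pos (hsumy m) (fun j => (hw _).le) 0 (hw _)
  have hkey : ∀ j : ℕ, ngnbWeight γ k q (y + 1 + j) * ngnbWeight γ k q y
      ≤ ngnbWeight γ k q (y + j) * ngnbWeight γ k q (y + 1) := by
    intro j
    induction j with
    | zero => simp [mul_comm]
    | succ j ih =>
      have h1 : ngnbWeight γ k q (y + 1 + (j + 1))
          = ngnbRatio γ k q (y + 1 + j) * ngnbWeight γ k q (y + 1 + j) := by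
        have := ngnb_weight_succ γ k hk q (y + 1 + j)
        rw [show y + 1 + j + 1 = y + 1 + (j + 1) by ring] at this
        exact this
      have h2 : ngnbWeight γ k q (y + (j + 1))
          = ngnbRatio γ k q (y + j) * ngnbWeight γ k q (y + j) := by
        have := ngnb_weight_succ γ k hk q (y + j)
        rw [show y + j + 1 = y + (j + 1) by ring] at this
        exact this
      have hr : ngnbRatio γ k q (y + 1 + j) ≤ ngnbRatio γ k q (y + j) := by
        have := ngnbRatio_lt γ hγ k hk q hq0 (y + j)
        rw [show y + j + 1 = y + 1 + j by ring] at this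
        exact this.le
      rw [h1, h2, mul_assoc, mul_assoc]
      exact mul_le_mul hr ih (mul_pos (hw _) (hw _)).le (ngnbRatio_pos γ k hk q hq0 (y + j)).le
  have hstrict : ngnbWeight γ k q (y + 1 + 1) * ngnbWeight γ k q y
      < ngnbWeight γ k q (y + 1) * ngnbWeight γ k q (y + 1) := by
    have h1 := ngnb_weight_succ γ k hk q (y + 1)
    have h2 := ngnb_weight_succ γ k hk q y
    have hr := ngnbRatio_lt γ hγ k hk q hq0 y
    calc ngnbWeight γ k q (y + 1 + 1) * ngnbWeight γ k q y
        = ngnbRatio γ k q (y + 1) * (ngnbWeight γ k q (y + 1) * ngnbWeight γ k q y) := by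
          rw [h1]; ring
      _ < ngnbRatio γ k q y * (ngnbWeight γ k q (y + 1) * ngnbWeight γ k q y) :=
          mul_lt_mul_of_pos_right hr (mul_pos (hw _) (hw _))
      _ = ngnbWeight γ k q (y + 1) * ngnbWeight γ k q (y + 1) := by
          rw [h2]; ring
  rw [ngnbFailureRate, ngnbFailureRate, div_lt_div_iff₀ (hSpos y) (hSpos (y + 1)),
    ← tsum_mul_left, ← tsum_mul_left]
  refine Summable.tsum_lt_tsum (i := 1) (fun j => ?_) ?_ ((hsumy (y + 1)).mul_left _)
    ((hsumy y).mul_left _)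
  · calc ngnbWeight γ k q y * ngnbWeight γ k q (y + 1 + j)
        = ngnbWeight γ k q (y + 1 + j) * ngnbWeight γ k q y := mul_comm _ _
      _ ≤ ngnbWeight γ k q (y + j) * ngnbWeight γ k q (y + 1) := hkey j
      _ = ngnbWeight γ k q (y + 1) * ngnbWeight γ k q (y + j) := mul_comm _ _
  · simpa [mul_comm] using hstrict
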